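/- arXiv:2211.02938 — 2 statements merged into one kernel-verified Lean document; each statement's English description precedes it below -/
import Mathlib

section
/- Let d ≥ 1 and let α, β be real numbers with α + β > d, α < d, and β < d. Then there exists a constant C such that for every n ∈ ℤ^d, the sum over all decompositions n = n₁ + n₂ with n₁, n₂ ∈ ℤ^d of ⟨n₁⟩^(−α) ⟨n₂⟩^(−β) is at most C ⟨n⟩^(d − α − β), where ⟨m⟩ = (1 + |m|²)^{1/2}. -/
/-- Japanese bracket of a lattice point. -/
noncomputable def jbZ {d : ℕ} (n : Fin d → ℤ) : ℝ :=
  Real.sqrt (1 + ∑ i, ((n i : ℝ)) ^ 2)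

lemma jbZ_sq {d : ℕ} (n : Fin d → ℤ) : jbZ n ^ 2 = 1 + ∑ i, ((n i : ℝ)) ^ 2 := by
  have h : (0:ℝ) ≤ 1 + ∑ i, ((n i : ℝ)) ^ 2 := by positivity
  rw [jbZ, Real.sq_sqrt h]

lemma one_le_jbZ {d : ℕ} (n : Fin d → ℤ) : 1 ≤ jbZ n := by
  rw [jbZ]
  have : (1:ℝ) = Real.sqrt 1 := (Real.sqrt_one).symm
  rw [this]
  apply Real.sqrt_le_sqrt
  have : (0:ℝ) ≤ ∑ i, ((n i : ℝ)) ^ 2 := by positivity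
  linarith

lemma jbZ_pos {d : ℕ} (n : Fin d → ℤ) : 0 < jbZ n := lt_of_lt_of_le one_pos (one_le_jbZ n)

lemma abs_coord_le_jbZ {d : ℕ} (n : Fin d → ℤ) (i : Fin d) : |(n i : ℝ)| ≤ jbZ n := by
  have h1 : ((n i : ℝ))^2 ≤ 1 + ∑ j, ((n j : ℝ)) ^ 2 := by
    have := Finset.single_le_sum (f := fun j => ((n j : ℝ))^2) (fun j _ => by positivity)
      (Finset.mem_univ i)
    linarith
  calc |(n i : ℝ)| = Real.sqrt (((n i : ℝ))^2) := (Real.sqrt_sq_eq_abs _).symm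
    _ ≤ jbZ n := Real.sqrt_le_sqrt h1

lemma jbZ_triangle {d : ℕ} (a b : Fin d → ℤ) : jbZ (a + b) ≤ jbZ a + jbZ b := by
  have ha : (0:ℝ) ≤ 1 + ∑ i, ((a i : ℝ)) ^ 2 := by positivity
  have hb : (0:ℝ) ≤ 1 + ∑ i, ((b i : ℝ)) ^ 2 := by positivity
  have hcs : (∑ i, (a i : ℝ) * (b i : ℝ)) ≤
      Real.sqrt (1 + ∑ i, ((a i : ℝ))^2) * Real.sqrt (1 + ∑ i, ((b i : ℝ))^2) := by
    have h1 := Finset.sum_mul_sq_le_sq_mul_sq Finset.univ (fun i => ((a i : ℝ)))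
      (fun i => ((b i : ℝ)))
    have h2 : (∑ i, (a i : ℝ) * (b i : ℝ)) ≤
        Real.sqrt ((∑ i, ((a i:ℝ))^2) * (∑ i, ((b i:ℝ))^2)) := by
      calc (∑ i, (a i : ℝ) * (b i : ℝ)) ≤ |∑ i, (a i : ℝ) * (b i : ℝ)| := le_abs_self _
        _ = Real.sqrt ((∑ i, (a i : ℝ) * (b i : ℝ))^2) := (Real.sqrt_sq_eq_abs _).symm
        _ ≤ _ := Real.sqrt_le_sqrt h1
    refine h2.trans ?_
    rw [← Real.sqrt_mul (by positivity)]
    apply Real.sqrt_le_sqrt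
    have hsa : (0:ℝ) ≤ ∑ i, ((a i:ℝ))^2 := by positivity
    have hsb : (0:ℝ) ≤ ∑ i, ((b i:ℝ))^2 := by positivity
    nlinarith
  have key : 1 + ∑ i, (((a+b) i : ℝ))^2 ≤ (jbZ a + jbZ b)^2 := by
    have hexp : ∀ i, (((a+b) i : ℝ))^2 = ((a i:ℝ))^2 + 2*((a i:ℝ))*((b i:ℝ)) + ((b i:ℝ))^2 := by
      intro i
      simp only [Pi.add_apply, Int.cast_add]
      ring
    rw [Finset.sum_congr rfl (fun i _ => hexp i)]
    rw [Finset.sum_add_distrib, Finset.sum_add_distrib]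
    have h2 : ∑ i, 2*((a i:ℝ))*((b i:ℝ)) = 2 * ∑ i, (a i:ℝ)*(b i:ℝ) := by
      rw [Finset.mul_sum]; congr 1; ext i; ring
    rw [h2]
    have hsq : (jbZ a + jbZ b)^2 = (1 + ∑ i, ((a i:ℝ))^2) + (1 + ∑ i, ((b i:ℝ))^2)
        + 2 * (jbZ a * jbZ b) := by
      have := jbZ_sq a; have := jbZ_sq b; nlinarith [jbZ_sq a, jbZ_sq b]
    rw [hsq, jbZ, jbZ]
    nlinarith [hcs]
  calc jbZ (a+b) = Real.sqrt (1 + ∑ i, (((a+b) i : ℝ))^2) := rfl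
    _ ≤ Real.sqrt ((jbZ a + jbZ b)^2) := Real.sqrt_le_sqrt key
    _ = |jbZ a + jbZ b| := Real.sqrt_sq_eq_abs _
    _ = jbZ a + jbZ b := abs_of_nonneg (by have := jbZ_pos a; have := jbZ_pos b; linarith)




noncomputable def shIdx {d : ℕ} (m : Fin d → ℤ) : ℕ := (⌊Real.logb 2 (jbZ m)⌋).toNat

lemma logb_jbZ_nonneg {d : ℕ} (m : Fin d → ℤ) : 0 ≤ Real.logb 2 (jbZ m) :=
  Real.logb_nonneg one_lt_two (one_le_jbZ m)

lemma shIdx_cast {d : ℕ} (m : Fin d → ℤ) :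
    ((shIdx m : ℝ)) = (⌊Real.logb 2 (jbZ m)⌋ : ℝ) := by
  rw [shIdx]
  norm_cast
  exact Int.toNat_of_nonneg (Int.floor_nonneg.mpr (logb_jbZ_nonneg m))

lemma shIdx_le {d : ℕ} (m : Fin d → ℤ) : (2:ℝ)^(shIdx m) ≤ jbZ m := by
  have h1 : ((shIdx m : ℝ)) ≤ Real.logb 2 (jbZ m) := by
    rw [shIdx_cast]; exact Int.floor_le _
  calc (2:ℝ)^(shIdx m) = (2:ℝ)^((shIdx m : ℕ) : ℝ) := (Real.rpow_natCast 2 _).symm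
    _ ≤ (2:ℝ)^(Real.logb 2 (jbZ m)) := Real.rpow_le_rpow_of_exponent_le one_le_two h1
    _ = jbZ m := Real.rpow_logb two_pos (by norm_num) (jbZ_pos m)

lemma lt_shIdx {d : ℕ} (m : Fin d → ℤ) : jbZ m < 2^(shIdx m + 1) := by
  have h1 : Real.logb 2 (jbZ m) < ((shIdx m : ℝ)) + 1 := by
    rw [shIdx_cast]; exact Int.lt_floor_add_one _
  calc jbZ m = (2:ℝ)^(Real.logb 2 (jbZ m)) := (Real.rpow_logb two_pos (by norm_num) (jbZ_pos m)).symm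
    _ < (2:ℝ)^(((shIdx m : ℝ)) + 1) := Real.rpow_lt_rpow_of_exponent_lt one_lt_two h1
    _ = 2^(shIdx m + 1) := by
        rw [← Real.rpow_natCast 2 (shIdx m + 1)]; norm_num

lemma shell_card {d : ℕ} (k : ℕ) (s : Finset (Fin d → ℤ)) (h : ∀ m ∈ s, jbZ m < 2^(k+1)) :
    (s.card : ℝ) ≤ 8^d * ((2:ℝ)^k)^d := by
  classical
  have hsub : s ⊆ Fintype.piFinset (fun _ : Fin d => Finset.Icc (-(2^(k+1):ℤ)) (2^(k+1))) := by
    intro m hm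
    rw [Fintype.mem_piFinset]
    intro i
    rw [Finset.mem_Icc]
    have h1 : |(m i : ℝ)| < (2:ℝ)^(k+1) := lt_of_le_of_lt (abs_coord_le_jbZ m i) (h m hm)
    have h2 : |m i| ≤ (2^(k+1) : ℤ) := by
      have : (|m i| : ℝ) < ((2^(k+1) : ℤ) : ℝ) := by push_cast; exact h1
      exact_mod_cast this.le
    exact abs_le.mp h2
  have hcard : s.card ≤ (2^(k+2)+1)^d := by
    calc s.card ≤ _ := Finset.card_le_card hsub
      _ = ∏ _i : Fin d, (Finset.Icc (-(2^(k+1):ℤ)) (2^(k+1))).card := Fintype.card_piFinset _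
      _ = (2^(k+2)+1)^d := by
          rw [Int.card_Icc]
          simp only [Finset.prod_const, Finset.card_univ, Fintype.card_fin]
          congr 1
          have h5 : (2^(k+1)+1-(-(2^(k+1))) : ℤ) = ((2^(k+2)+1 : ℕ) : ℤ) := by push_cast; ring
          rw [h5, Int.toNat_natCast]
  have h3 : ((2^(k+2)+1 : ℕ) : ℝ) ≤ 8 * (2:ℝ)^k := by
    push_cast
    have : (2:ℝ)^(k+2) = 4 * 2^k := by ring
    have h4 : (1:ℝ) ≤ (2:ℝ)^k := one_le_pow₀ one_le_two
    rw [this]; linarith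
  calc (s.card : ℝ) ≤ (((2^(k+2)+1)^d : ℕ) : ℝ) := by exact_mod_cast hcard
    _ = (((2^(k+2)+1 : ℕ) : ℝ))^d := by push_cast; ring
    _ ≤ (8 * (2:ℝ)^k)^d := by
        apply pow_le_pow_left₀ (by positivity) h3
    _ = 8^d * ((2:ℝ)^k)^d := mul_pow _ _ _

lemma fiber_sum {d : ℕ} (γ : ℝ) (hγ : 0 ≤ γ) (k : ℕ) (s : Finset (Fin d → ℤ))
    (h1 : ∀ m ∈ s, (2:ℝ)^k ≤ jbZ m) (h2 : ∀ m ∈ s, jbZ m < 2^(k+1)) :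
    ∑ m ∈ s, jbZ m ^ (-γ) ≤ 8^d * ((2:ℝ)^((d:ℝ) - γ))^k := by
  have hterm : ∀ m ∈ s, jbZ m ^ (-γ) ≤ ((2:ℝ)^k)^(-γ) := by
    intro m hm
    exact Real.rpow_le_rpow_of_nonpos (by positivity) (h1 m hm) (neg_nonpos.mpr hγ)
  calc ∑ m ∈ s, jbZ m ^ (-γ) ≤ ∑ _m ∈ s, ((2:ℝ)^k)^(-γ) := Finset.sum_le_sum hterm
    _ = (s.card : ℝ) * ((2:ℝ)^k)^(-γ) := by rw [Finset.sum_const, nsmul_eq_mul]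
    _ ≤ (8^d * ((2:ℝ)^k)^d) * ((2:ℝ)^k)^(-γ) := by
        apply mul_le_mul_of_nonneg_right (shell_card k s h2) (by positivity)
    _ = 8^d * ((2:ℝ)^((d:ℝ) - γ))^k := by
        rw [mul_assoc]
        congr 1
        rw [← Real.rpow_natCast ((2:ℝ)^k) d, ← Real.rpow_natCast 2 k,
          ← Real.rpow_mul (by norm_num), ← Real.rpow_mul (by norm_num),
          ← Real.rpow_add two_pos,
          ← Real.rpow_natCast ((2:ℝ)^((d:ℝ)-γ)) k, ← Real.rpow_mul (by norm_num)]
        ring_nf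




lemma fiberwise_decomp {d : ℕ} (γ : ℝ) (hγ : 0 ≤ γ) (s : Finset (Fin d → ℤ)) :
    ∑ m ∈ s, jbZ m ^ (-γ)
      ≤ ∑ k ∈ s.image shIdx, 8^d * ((2:ℝ)^((d:ℝ) - γ))^k := by
  classical
  rw [← Finset.sum_fiberwise_of_maps_to (g := shIdx) (t := s.image shIdx)
    (fun m hm => Finset.mem_image_of_mem shIdx hm) (fun m => jbZ m ^ (-γ))]
  apply Finset.sum_le_sum
  intro k _
  apply fiber_sum γ hγ k
  · intro m hm
    have := (Finset.mem_filter.mp hm).2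
    rw [← this]; exact shIdx_le m
  · intro m hm
    have := (Finset.mem_filter.mp hm).2
    rw [← this]; exact lt_shIdx m

lemma pow_shell_eq {c : ℝ} (k : ℕ) : ((2:ℝ)^c)^k = ((2:ℝ)^((k:ℝ)))^c := by
  rw [← Real.rpow_natCast ((2:ℝ)^c) k, ← Real.rpow_mul (by norm_num),
    ← Real.rpow_mul (by norm_num), mul_comm]

lemma lemA (d : ℕ) (γ : ℝ) (hγ0 : 0 < γ) (hγ : γ < d) :
    ∃ C > 0, ∀ R : ℝ, 1 ≤ R → ∀ s : Finset (Fin d → ℤ),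
      (∀ m ∈ s, jbZ m ≤ R) → ∑ m ∈ s, jbZ m ^ (-γ) ≤ C * R ^ ((d:ℝ) - γ) := by
  set x : ℝ := (2:ℝ)^((d:ℝ)-γ) with hxdef
  have hdγ : (0:ℝ) < (d:ℝ) - γ := by linarith
  have hx1 : 1 < x := (Real.one_lt_rpow_iff_of_pos two_pos).mpr (Or.inl ⟨one_lt_two, hdγ⟩)
  have hx0 : 0 < x := lt_trans one_pos hx1
  have hxm1 : 0 < x - 1 := by linarith
  refine ⟨8^d * (x * (x-1)⁻¹), by positivity, ?_⟩
  intro R hR s hs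
  have hR0 : 0 < R := lt_of_lt_of_le one_pos hR
  set K : ℕ := (⌊Real.logb 2 R⌋).toNat with hKdef
  have hlogb0 : 0 ≤ Real.logb 2 R := Real.logb_nonneg one_lt_two hR
  have hKcast : ((K:ℝ)) ≤ Real.logb 2 R := by
    have hflo : (0:ℤ) ≤ ⌊Real.logb 2 R⌋ := Int.floor_nonneg.mpr hlogb0
    have h1 : ((K:ℝ)) = ((⌊Real.logb 2 R⌋ : ℤ) : ℝ) := by
      rw [hKdef]; norm_cast
      exact Int.toNat_of_nonneg hflo
    rw [h1]; exact Int.floor_le _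
  have h2K : (2:ℝ)^((K:ℝ)) ≤ R := by
    calc (2:ℝ)^((K:ℝ)) ≤ (2:ℝ)^(Real.logb 2 R) :=
          Real.rpow_le_rpow_of_exponent_le one_le_two hKcast
      _ = R := Real.rpow_logb two_pos (by norm_num) hR0
  have hxK : x^K ≤ R^((d:ℝ)-γ) := by
    rw [hxdef, pow_shell_eq]
    exact Real.rpow_le_rpow (by positivity) h2K hdγ.le
  have hsub : s.image shIdx ⊆ Finset.range (K+1) := by
    intro k hk
    obtain ⟨m, hm, rfl⟩ := Finset.mem_image.mp hk
    rw [Finset.mem_range]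
    have h2k : (2:ℝ)^((shIdx m : ℝ)) ≤ R := by
      rw [Real.rpow_natCast]
      exact le_trans (shIdx_le m) (hs m hm)
    have hlogb : ((shIdx m : ℝ)) ≤ Real.logb 2 R :=
      (Real.le_logb_iff_rpow_le one_lt_two hR0).mpr h2k
    have hfl : ((shIdx m : ℤ)) ≤ ⌊Real.logb 2 R⌋ := Int.le_floor.mpr (by exact_mod_cast hlogb)
    omega
  calc ∑ m ∈ s, jbZ m ^ (-γ)
      ≤ ∑ k ∈ s.image shIdx, 8^d * x^k := fiberwise_decomp γ hγ0.le s
    _ ≤ ∑ k ∈ Finset.range (K+1), 8^d * x^k :=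
        Finset.sum_le_sum_of_subset_of_nonneg hsub (by intros; positivity)
    _ = 8^d * ((x^(K+1) - 1)/(x-1)) := by
        rw [← Finset.mul_sum, geom_sum_eq (ne_of_gt hx1)]
    _ ≤ 8^d * ((x * R^((d:ℝ)-γ))/(x-1)) := by
        have hnum : x^(K+1) - 1 ≤ x * R^((d:ℝ)-γ) := by
          have : x^(K+1) = x * x^K := by ring
          nlinarith [hxK, hx0]
        gcongr
    _ = (8^d * (x * (x-1)⁻¹)) * R^((d:ℝ)-γ) := by
        field_simp

lemma lemB (d : ℕ) (r : ℝ) (hr : (d:ℝ) < r) :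
    ∃ C > 0, ∀ R : ℝ, 0 < R → ∀ s : Finset (Fin d → ℤ),
      (∀ m ∈ s, R ≤ jbZ m) → ∑ m ∈ s, jbZ m ^ (-r) ≤ C * R ^ ((d:ℝ) - r) := by
  set x : ℝ := (2:ℝ)^((d:ℝ)-r) with hxdef
  have hdr : (d:ℝ) - r < 0 := by linarith
  have hx1 : x < 1 := Real.rpow_lt_one_of_one_lt_of_neg one_lt_two hdr
  have hx0 : 0 < x := Real.rpow_pos_of_pos two_pos _
  have h1x : 0 < 1 - x := by linarith
  refine ⟨8^d * ((2:ℝ)^(r-(d:ℝ)) * (1-x)⁻¹), by positivity, ?_⟩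
  intro R hR0 s hs
  classical
  set t := s.image shIdx with htdef
  set k₀ : ℕ := (⌊Real.logb 2 R⌋).toNat with hk₀def
  have hmem : ∀ k ∈ t, k₀ ≤ k := by
    intro k hk
    obtain ⟨m, hm, rfl⟩ := Finset.mem_image.mp hk
    have h1 : R < (2:ℝ)^(((shIdx m : ℝ)) + 1) := by
      calc R ≤ jbZ m := hs m hm
        _ < 2^(shIdx m + 1) := lt_shIdx m
        _ = (2:ℝ)^(((shIdx m : ℝ)) + 1) := by
            rw [← Real.rpow_natCast 2 (shIdx m + 1)]; norm_num
    have h2 : Real.logb 2 R < ((shIdx m : ℝ)) + 1 :=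
      (Real.logb_lt_iff_lt_rpow one_lt_two hR0).mpr h1
    have h3 : ⌊Real.logb 2 R⌋ < (shIdx m : ℤ) + 1 := Int.floor_lt.mpr (by exact_mod_cast h2)
    omega
  -- lower bound on 2^k₀
  have h2k₀ : R / 2 ≤ (2:ℝ)^((k₀:ℝ)) := by
    have hfl : Real.logb 2 R - 1 ≤ ((k₀:ℝ)) := by
      have h4 : (⌊Real.logb 2 R⌋ : ℝ) ≤ ((k₀:ℝ)) := by
        have : ⌊Real.logb 2 R⌋ ≤ (k₀ : ℤ) := by omega
        exact_mod_cast this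
      have h5 := Int.lt_floor_add_one (Real.logb 2 R)
      linarith
    calc R / 2 = (2:ℝ)^(Real.logb 2 R - 1) := by
          rw [Real.rpow_sub two_pos, Real.rpow_logb two_pos (by norm_num) hR0, Real.rpow_one]
      _ ≤ (2:ℝ)^((k₀:ℝ)) := Real.rpow_le_rpow_of_exponent_le one_le_two hfl
  have hxk₀ : x^k₀ ≤ (2:ℝ)^(r-(d:ℝ)) * R^((d:ℝ)-r) := by
    rw [hxdef, pow_shell_eq]
    calc ((2:ℝ)^((k₀:ℝ)))^((d:ℝ)-r) ≤ (R/2)^((d:ℝ)-r) :=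
          Real.rpow_le_rpow_of_nonpos (by positivity) h2k₀ hdr.le
      _ = (2:ℝ)^(r-(d:ℝ)) * R^((d:ℝ)-r) := by
          rw [Real.div_rpow hR0.le (by norm_num : (0:ℝ) ≤ 2), div_eq_mul_inv,
            ← Real.rpow_neg (by norm_num : (0:ℝ) ≤ 2), neg_sub]
          ring
  have hgeo : ∑ k ∈ t, x^k ≤ x^k₀ * (1-x)⁻¹ := by
    have hinj : ∀ a ∈ t, ∀ b ∈ t, a - k₀ = b - k₀ → a = b := by
      intro a ha b hb h
      have := hmem a ha; have := hmem b hb; omega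
    have heq : ∑ j ∈ t.image (· - k₀), x^(k₀ + j) = ∑ k ∈ t, x^k := by
      rw [Finset.sum_image hinj]
      exact Finset.sum_congr rfl fun k hk => by rw [Nat.add_sub_cancel' (hmem k hk)]
    rw [← heq]
    calc ∑ j ∈ t.image (· - k₀), x^(k₀+j)
        = x^k₀ * ∑ j ∈ t.image (· - k₀), x^j := by
          rw [Finset.mul_sum]
          exact Finset.sum_congr rfl fun j _ => pow_add x k₀ j
      _ ≤ x^k₀ * ∑' j : ℕ, x^j := by
          apply mul_le_mul_of_nonneg_left _ (by positivity)
          exact Summable.sum_le_tsum _ (fun j _ => by positivity)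
            (summable_geometric_of_lt_one hx0.le hx1)
      _ = x^k₀ * (1-x)⁻¹ := by rw [tsum_geometric_of_lt_one hx0.le hx1]
  calc ∑ m ∈ s, jbZ m ^ (-r)
      ≤ ∑ k ∈ t, 8^d * x^k := fiberwise_decomp r (le_of_lt (lt_of_le_of_lt (Nat.cast_nonneg d) hr)) s
    _ = 8^d * ∑ k ∈ t, x^k := by rw [Finset.mul_sum]
    _ ≤ 8^d * (x^k₀ * (1-x)⁻¹) := by gcongr
    _ ≤ 8^d * (((2:ℝ)^(r-(d:ℝ)) * R^((d:ℝ)-r)) * (1-x)⁻¹) := by gcongr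
    _ = (8^d * ((2:ℝ)^(r-(d:ℝ)) * (1-x)⁻¹)) * R^((d:ℝ)-r) := by ring




theorem sum_convolution_bracket (d : ℕ) (hd : 1 ≤ d) (α β : ℝ)
    (hαβ : α + β > d) (hα : α < d) (hβ : β < d) :
    ∃ C > 0, ∀ n : Fin d → ℤ,
      (∑' n₁ : Fin d → ℤ, jbZ n₁ ^ (-α) * jbZ (n - n₁) ^ (-β))
        ≤ C * jbZ n ^ ((d : ℝ) - α - β) := by
  have hα0 : 0 < α := by linarith
  have hβ0 : 0 < β := by linarith
  obtain ⟨C₁, hC₁0, hC₁⟩ := lemA d α hα0 hα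
  obtain ⟨C₂, hC₂0, hC₂⟩ := lemA d β hβ0 hβ
  obtain ⟨C₃, hC₃0, hC₃⟩ := lemB d (α+β) hαβ
  refine ⟨C₁ * (2:ℝ)^β + C₂ * (2:ℝ)^α + 2 * (C₃ * (2:ℝ)^(α+β-(d:ℝ))), by positivity, ?_⟩
  intro n
  set N := jbZ n with hNdef
  have hN1 : 1 ≤ N := one_le_jbZ n
  have hN0 : 0 < N := jbZ_pos n
  have hhalf : ∀ γ : ℝ, (N/2) ^ γ = (2:ℝ)^(-γ) * N ^ γ := by
    intro γ
    rw [Real.div_rpow hN0.le (by norm_num : (0:ℝ) ≤ 2),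
      Real.rpow_neg (by norm_num : (0:ℝ) ≤ 2), div_eq_mul_inv, mul_comm]
  have tri : ∀ m : Fin d → ℤ, N ≤ jbZ m + jbZ (n - m) := by
    intro m
    have h := jbZ_triangle m (n - m)
    have h2 : m + (n - m) = n := by ring
    rw [h2] at h
    exact h
  -- Region 1 bound
  have hreg1 : ∀ u : Finset (Fin d → ℤ), (∀ m ∈ u, 2 * jbZ m ≤ N) →
      ∑ m ∈ u, jbZ m ^ (-α) * jbZ (n - m) ^ (-β)
        ≤ C₁ * (2:ℝ)^β * N ^ ((d:ℝ) - α - β) := by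
    intro u hu
    have hterm : ∀ m ∈ u, jbZ m ^ (-α) * jbZ (n - m) ^ (-β) ≤ jbZ m ^ (-α) * (N/2) ^ (-β) := by
      intro m hm
      have h1 : N / 2 ≤ jbZ (n - m) := by
        have := tri m; have := hu m hm; linarith
      exact mul_le_mul_of_nonneg_left
        (Real.rpow_le_rpow_of_nonpos (by linarith) h1 (neg_nonpos.mpr hβ0.le)) (Real.rpow_nonneg (jbZ_pos m).le _)
    calc ∑ m ∈ u, jbZ m ^ (-α) * jbZ (n - m) ^ (-β)
        ≤ ∑ m ∈ u, jbZ m ^ (-α) * (N/2) ^ (-β) := Finset.sum_le_sum hterm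
      _ = (∑ m ∈ u, jbZ m ^ (-α)) * (N/2) ^ (-β) := by rw [Finset.sum_mul]
      _ ≤ (C₁ * N ^ ((d:ℝ) - α)) * (N/2) ^ (-β) := by
          apply mul_le_mul_of_nonneg_right _ (by positivity)
          apply hC₁ N hN1 u
          intro m hm
          have := hu m hm
          linarith
      _ = C₁ * (2:ℝ)^β * (N ^ ((d:ℝ) - α) * N ^ (-β)) := by
          rw [hhalf, neg_neg]; ring
      _ = C₁ * (2:ℝ)^β * N ^ ((d:ℝ) - α - β) := by
          rw [← Real.rpow_add hN0, show (d:ℝ) - α + -β = (d:ℝ) - α - β by ring]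
  -- Region 2 bound
  have hreg2 : ∀ u : Finset (Fin d → ℤ), (∀ m ∈ u, N/2 ≤ jbZ m ∧ jbZ (n - m) ≤ N/2) →
      ∑ m ∈ u, jbZ m ^ (-α) * jbZ (n - m) ^ (-β)
        ≤ C₂ * (2:ℝ)^α * N ^ ((d:ℝ) - α - β) := by
    intro u hu
    have hterm : ∀ m ∈ u, jbZ m ^ (-α) * jbZ (n - m) ^ (-β)
        ≤ (N/2) ^ (-α) * jbZ (n - m) ^ (-β) := by
      intro m hm
      exact mul_le_mul_of_nonneg_right
        (Real.rpow_le_rpow_of_nonpos (by linarith) (hu m hm).1 (neg_nonpos.mpr hα0.le))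
        (Real.rpow_nonneg (jbZ_pos (n - m)).le _)
    have himg : ∑ m ∈ u, jbZ (n - m) ^ (-β)
        = ∑ m' ∈ u.image (fun m => n - m), jbZ m' ^ (-β) := by
      rw [Finset.sum_image]
      intro a _ b _ h
      have h2 : n - (n - a) = n - (n - b) := by rw [show n - a = n - b from h]
      simpa using h2
    calc ∑ m ∈ u, jbZ m ^ (-α) * jbZ (n - m) ^ (-β)
        ≤ ∑ m ∈ u, (N/2) ^ (-α) * jbZ (n - m) ^ (-β) := Finset.sum_le_sum hterm
      _ = (N/2) ^ (-α) * ∑ m ∈ u, jbZ (n - m) ^ (-β) := by rw [Finset.mul_sum]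
      _ ≤ (N/2) ^ (-α) * (C₂ * N ^ ((d:ℝ) - β)) := by
          apply mul_le_mul_of_nonneg_left _ (by positivity)
          rw [himg]
          apply hC₂ N hN1
          intro m' hm'
          obtain ⟨m, hm, rfl⟩ := Finset.mem_image.mp hm'
          have := (hu m hm).2
          linarith
      _ = C₂ * (2:ℝ)^α * (N ^ (-α) * N ^ ((d:ℝ) - β)) := by
          rw [hhalf, neg_neg]; ring
      _ = C₂ * (2:ℝ)^α * N ^ ((d:ℝ) - α - β) := by
          rw [← Real.rpow_add hN0, show -α + ((d:ℝ) - β) = (d:ℝ) - α - β by ring]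
  -- Region 3a bound
  have hreg3a : ∀ u : Finset (Fin d → ℤ), (∀ m ∈ u, N/2 ≤ jbZ m ∧ jbZ m ≤ jbZ (n - m)) →
      ∑ m ∈ u, jbZ m ^ (-α) * jbZ (n - m) ^ (-β)
        ≤ C₃ * (2:ℝ)^(α+β-(d:ℝ)) * N ^ ((d:ℝ) - α - β) := by
    intro u hu
    have hterm : ∀ m ∈ u, jbZ m ^ (-α) * jbZ (n - m) ^ (-β) ≤ jbZ m ^ (-(α+β)) := by
      intro m hm
      calc jbZ m ^ (-α) * jbZ (n - m) ^ (-β)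
          ≤ jbZ m ^ (-α) * jbZ m ^ (-β) := mul_le_mul_of_nonneg_left
            (Real.rpow_le_rpow_of_nonpos (jbZ_pos m) (hu m hm).2 (neg_nonpos.mpr hβ0.le))
            (Real.rpow_nonneg (jbZ_pos m).le _)
        _ = jbZ m ^ (-(α+β)) := by
            rw [← Real.rpow_add (jbZ_pos m), show -α + -β = -(α+β) by ring]
    calc ∑ m ∈ u, jbZ m ^ (-α) * jbZ (n - m) ^ (-β)
        ≤ ∑ m ∈ u, jbZ m ^ (-(α+β)) := Finset.sum_le_sum hterm
      _ ≤ C₃ * (N/2) ^ ((d:ℝ) - (α+β)) := hC₃ (N/2) (by linarith) u (fun m hm => (hu m hm).1)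
      _ = C₃ * (2:ℝ)^(α+β-(d:ℝ)) * N ^ ((d:ℝ) - α - β) := by
          rw [hhalf, show -((d:ℝ) - (α+β)) = α+β-(d:ℝ) by ring,
            show (d:ℝ) - (α+β) = (d:ℝ) - α - β by ring]
          ring
  -- Region 3b bound
  have hreg3b : ∀ u : Finset (Fin d → ℤ), (∀ m ∈ u, N/2 ≤ jbZ (n - m) ∧ jbZ (n - m) ≤ jbZ m) →
      ∑ m ∈ u, jbZ m ^ (-α) * jbZ (n - m) ^ (-β)
        ≤ C₃ * (2:ℝ)^(α+β-(d:ℝ)) * N ^ ((d:ℝ) - α - β) := by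
    intro u hu
    have hterm : ∀ m ∈ u, jbZ m ^ (-α) * jbZ (n - m) ^ (-β) ≤ jbZ (n - m) ^ (-(α+β)) := by
      intro m hm
      calc jbZ m ^ (-α) * jbZ (n - m) ^ (-β)
          ≤ jbZ (n - m) ^ (-α) * jbZ (n - m) ^ (-β) := mul_le_mul_of_nonneg_right
            (Real.rpow_le_rpow_of_nonpos (jbZ_pos (n - m)) (hu m hm).2 (neg_nonpos.mpr hα0.le))
            (Real.rpow_nonneg (jbZ_pos (n - m)).le _)
        _ = jbZ (n - m) ^ (-(α+β)) := by
            rw [← Real.rpow_add (jbZ_pos (n - m)), show -α + -β = -(α+β) by ring]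
    have himg : ∑ m ∈ u, jbZ (n - m) ^ (-(α+β))
        = ∑ m' ∈ u.image (fun m => n - m), jbZ m' ^ (-(α+β)) := by
      rw [Finset.sum_image]
      intro a _ b _ h
      have h2 : n - (n - a) = n - (n - b) := by rw [show n - a = n - b from h]
      simpa using h2
    calc ∑ m ∈ u, jbZ m ^ (-α) * jbZ (n - m) ^ (-β)
        ≤ ∑ m ∈ u, jbZ (n - m) ^ (-(α+β)) := Finset.sum_le_sum hterm
      _ = ∑ m' ∈ u.image (fun m => n - m), jbZ m' ^ (-(α+β)) := himg
      _ ≤ C₃ * (N/2) ^ ((d:ℝ) - (α+β)) := by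
          apply hC₃ (N/2) (by linarith)
          intro m' hm'
          obtain ⟨m, hm, rfl⟩ := Finset.mem_image.mp hm'
          exact (hu m hm).1
      _ = C₃ * (2:ℝ)^(α+β-(d:ℝ)) * N ^ ((d:ℝ) - α - β) := by
          rw [hhalf, show -((d:ℝ) - (α+β)) = α+β-(d:ℝ) by ring,
            show (d:ℝ) - (α+β) = (d:ℝ) - α - β by ring]
          ring
  -- assemble
  apply tsum_le_of_sum_le' (by positivity)
  intro s
  classical
  rw [← Finset.sum_filter_add_sum_filter_not s (fun m => 2 * jbZ m ≤ N)
      (fun m => jbZ m ^ (-α) * jbZ (n - m) ^ (-β)),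
    ← Finset.sum_filter_add_sum_filter_not (s.filter (fun m => ¬(2 * jbZ m ≤ N)))
      (fun m => 2 * jbZ (n - m) ≤ N) (fun m => jbZ m ^ (-α) * jbZ (n - m) ^ (-β)),
    ← Finset.sum_filter_add_sum_filter_not ((s.filter (fun m => ¬(2 * jbZ m ≤ N))).filter
      (fun m => ¬(2 * jbZ (n - m) ≤ N))) (fun m => jbZ m ≤ jbZ (n - m))
      (fun m => jbZ m ^ (-α) * jbZ (n - m) ^ (-β))]
  have h1 := hreg1 (s.filter (fun m => 2 * jbZ m ≤ N)) (by
    intro m hm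
    exact (Finset.mem_filter.mp hm).2)
  have h2 := hreg2 ((s.filter (fun m => ¬(2 * jbZ m ≤ N))).filter
      (fun m => 2 * jbZ (n - m) ≤ N)) (by
    intro m hm
    have ha := (Finset.mem_filter.mp hm).2
    have hb := (Finset.mem_filter.mp (Finset.mem_filter.mp hm).1).2
    constructor
    · push_neg at hb; linarith
    · linarith)
  have h3 := hreg3a (((s.filter (fun m => ¬(2 * jbZ m ≤ N))).filter
      (fun m => ¬(2 * jbZ (n - m) ≤ N))).filter (fun m => jbZ m ≤ jbZ (n - m))) (by
    intro m hm
    have ha := (Finset.mem_filter.mp hm).2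
    have hb := (Finset.mem_filter.mp (Finset.mem_filter.mp hm).1).2
    have hc := (Finset.mem_filter.mp (Finset.mem_filter.mp (Finset.mem_filter.mp hm).1).1).2
    push_neg at hb hc
    exact ⟨by linarith, ha⟩)
  have h4 := hreg3b (((s.filter (fun m => ¬(2 * jbZ m ≤ N))).filter
      (fun m => ¬(2 * jbZ (n - m) ≤ N))).filter (fun m => ¬(jbZ m ≤ jbZ (n - m)))) (by
    intro m hm
    have ha := (Finset.mem_filter.mp hm).2
    have hb := (Finset.mem_filter.mp (Finset.mem_filter.mp hm).1).2
    push_neg at ha hb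
    exact ⟨by linarith, ha.le⟩)
  linarith [h1, h2, h3, h4]
end

section
/- Let d ≥ 1 and let α, β, γ be real numbers with α + 2β > d, α + 2γ > d, α < d, 2β < d, and 2γ < d. Then there exists a constant C such that for all a, b ∈ ℝ^d, ∑_{n ∈ ℤ^d} ⟨n⟩^{−α} ⟨n + a⟩^{−β} ⟨n + b⟩^{−γ} ≤ C ⟨a⟩^{d/2 − α/2 − β} ⟨b⟩^{d/2 − α/2 − γ}. -/
open scoped ENNReal
open MeasureTheory

/-- Japanese bracket of a point of ℝ^d. -/
noncomputable def jbR {d : ℕ} (a : Fin d → ℝ) : ℝ :=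
  Real.sqrt (1 + ∑ i, (a i) ^ 2)

namespace TwoShift
variable {d : ℕ}

/-- shifted lattice bracket -/
noncomputable def jb (a : Fin d → ℝ) (n : Fin d → ℤ) : ℝ :=
  jbR (fun i => (n i : ℝ) + a i)

lemma one_le_jbR (x : Fin d → ℝ) : 1 ≤ jbR x := by
  rw [jbR, Real.one_le_sqrt]
  have : 0 ≤ ∑ i, (x i)^2 := Finset.sum_nonneg fun i _ => sq_nonneg _
  linarith

lemma jbR_pos (x : Fin d → ℝ) : 0 < jbR x := lt_of_lt_of_le one_pos (one_le_jbR x)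

lemma jbR_nonneg (x : Fin d → ℝ) : 0 ≤ jbR x := (jbR_pos x).le

lemma sq_jbR (x : Fin d → ℝ) : jbR x ^ 2 = 1 + ∑ i, (x i)^2 := by
  rw [jbR, Real.sq_sqrt]
  have : 0 ≤ ∑ i, (x i)^2 := Finset.sum_nonneg fun i _ => sq_nonneg _
  linarith

lemma jbZ_eq (n : Fin d → ℤ) : jbZ n = jbR (fun i => (n i : ℝ)) := rfl

lemma abs_coord_le (x : Fin d → ℝ) (i : Fin d) : |x i| ≤ jbR x := by
  have h1 : (x i)^2 ≤ 1 + ∑ j, (x j)^2 := by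
    have : (x i)^2 ≤ ∑ j, (x j)^2 :=
      Finset.single_le_sum (fun j _ => sq_nonneg (x j)) (Finset.mem_univ i)
    linarith
  calc |x i| = Real.sqrt ((x i)^2) := (Real.sqrt_sq_eq_abs _).symm
    _ ≤ jbR x := Real.sqrt_le_sqrt h1

lemma jbR_sub_le_two_mul_max (x y : Fin d → ℝ) :
    jbR (fun i => y i - x i) ≤ 2 * max (jbR x) (jbR y) := by
  have hQ : ∑ i, (y i - x i)^2 ≤ 2 * ∑ i, (x i)^2 + 2 * ∑ i, (y i)^2 := by
    rw [Finset.mul_sum, Finset.mul_sum, ← Finset.sum_add_distrib]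
    apply Finset.sum_le_sum
    intro i _
    nlinarith [sq_nonneg (y i + x i)]
  have hM : ∑ i, (x i)^2 ≤ max (jbR x) (jbR y) ^ 2 - 1 ∧
      ∑ i, (y i)^2 ≤ max (jbR x) (jbR y) ^ 2 - 1 := by
    constructor
    · calc ∑ i, (x i)^2 = jbR x ^ 2 - 1 := by rw [sq_jbR]; ring
        _ ≤ max (jbR x) (jbR y) ^ 2 - 1 := by
            have := le_max_left (jbR x) (jbR y)
            nlinarith [jbR_nonneg x]
    · calc ∑ i, (y i)^2 = jbR y ^ 2 - 1 := by rw [sq_jbR]; ring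
        _ ≤ max (jbR x) (jbR y) ^ 2 - 1 := by
            have := le_max_right (jbR x) (jbR y)
            nlinarith [jbR_nonneg y]
  have hm1 : 1 ≤ max (jbR x) (jbR y) := le_trans (one_le_jbR x) (le_max_left _ _)
  have : 1 + ∑ i, (y i - x i)^2 ≤ (2 * max (jbR x) (jbR y))^2 := by
    nlinarith [hM.1, hM.2]
  calc jbR (fun i => y i - x i) = Real.sqrt (1 + ∑ i, (y i - x i)^2) := rfl
    _ ≤ Real.sqrt ((2 * max (jbR x) (jbR y))^2) := Real.sqrt_le_sqrt this
    _ = 2 * max (jbR x) (jbR y) := by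
        rw [Real.sqrt_sq (by positivity)]


lemma count_box (a : Fin d → ℝ) (T : ℝ) (hT : 1 ≤ T) :
    ∃ s : Finset (Fin d → ℤ),
      (∀ n : Fin d → ℤ, jb a n ≤ T → n ∈ s) ∧ ((s.card : ℝ) ≤ (3 * T) ^ d) := by
  refine ⟨Fintype.piFinset (fun i => Finset.Icc ⌈-a i - T⌉ ⌊-a i + T⌋), ?_, ?_⟩
  · intro n hn
    rw [Fintype.mem_piFinset]
    intro i
    have h1 : |(n i : ℝ) + a i| ≤ T := by
      have := abs_coord_le (fun j => (n j : ℝ) + a j) i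
      exact le_trans this hn
    rw [abs_le] at h1
    rw [Finset.mem_Icc, Int.ceil_le, Int.le_floor]
    push_cast
    constructor <;> linarith [h1.1, h1.2]
  · rw [Fintype.card_piFinset]
    push_cast
    calc (∏ i : Fin d, ((Finset.Icc ⌈-a i - T⌉ ⌊-a i + T⌋).card : ℝ))
        ≤ ∏ _i : Fin d, (3 * T) := by
          apply Finset.prod_le_prod (fun i _ => by positivity)
          intro i _
          rcases le_or_gt ⌈-a i - T⌉ (⌊-a i + T⌋ + 1) with h | h
          · have hc := Int.card_Icc_of_le _ _ h
            have hc' : ((Finset.Icc ⌈-a i - T⌉ ⌊-a i + T⌋).card : ℝ)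
                = (⌊-a i + T⌋ : ℝ) + 1 - (⌈-a i - T⌉ : ℝ) := by exact_mod_cast hc
            rw [hc']
            have h2 := Int.floor_le (-a i + T)
            have h3 := Int.le_ceil (-a i - T)
            linarith
          · rw [Finset.Icc_eq_empty (by intro hle; omega)]
            simp
            positivity
      _ = (3 * T) ^ d := by rw [Finset.prod_const, Finset.card_univ, Fintype.card_fin]

lemma tsum_indicator_le {f : (Fin d → ℤ) → ℝ≥0∞} {S : Set (Fin d → ℤ)}
    {s : Finset (Fin d → ℤ)} (hs : ∀ n ∈ S, n ∈ s) {c : ℝ≥0∞}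
    (hc : ∀ n ∈ S, f n ≤ c) :
    ∑' n, S.indicator f n ≤ s.card * c := by
  have h1 : ∀ n, S.indicator f n ≤ (↑s : Set (Fin d → ℤ)).indicator (fun _ => c) n := by
    intro n
    by_cases hn : n ∈ S
    · rw [Set.indicator_of_mem hn, Set.indicator_of_mem (by exact hs n hn)]
      exact hc n hn
    · rw [Set.indicator_of_notMem hn]; exact zero_le
  calc ∑' n, S.indicator f n ≤ ∑' n, (↑s : Set (Fin d → ℤ)).indicator (fun _ => c) n :=
        ENNReal.tsum_le_tsum h1
    _ = ∑ n ∈ s, c := (sum_eq_tsum_indicator _ s).symm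
    _ = s.card * c := by rw [Finset.sum_const, nsmul_eq_mul]

/-- block estimate : sum over `R ≤ jb ≤ T` of `jb^(-σ)` -/
lemma block_sum (a : Fin d → ℝ) {σ : ℝ} (hσ : 0 ≤ σ) {R T : ℝ} (hR : 0 < R) (hT : 1 ≤ T) :
    ∑' n, Set.indicator {n | R ≤ jb a n ∧ jb a n ≤ T}
        (fun n => ENNReal.ofReal (jb a n ^ (-σ))) n
      ≤ ENNReal.ofReal ((3 * T) ^ d * R ^ (-σ)) := by
  obtain ⟨s, hmem, hcard⟩ := count_box a T hT
  have h := tsum_indicator_le (f := fun n => ENNReal.ofReal (jb a n ^ (-σ)))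
    (S := {n | R ≤ jb a n ∧ jb a n ≤ T}) (s := s)
    (fun n hn => hmem n hn.2)
    (c := ENNReal.ofReal (R ^ (-σ)))
    (fun n hn => by
      apply ENNReal.ofReal_le_ofReal
      exact Real.rpow_le_rpow_of_nonpos hR hn.1 (neg_nonpos.mpr hσ))
  refine h.trans ?_
  rw [ENNReal.ofReal_mul (by positivity)]
  apply mul_le_mul_left
  rw [show ((s.card : ℝ≥0∞)) = ENNReal.ofReal (s.card : ℝ) by
    rw [ENNReal.ofReal_natCast]]
  exact ENNReal.ofReal_le_ofReal hcard


lemma one_le_jb (a : Fin d → ℝ) (n : Fin d → ℤ) : 1 ≤ jb a n := one_le_jbR _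

open Classical in
/-- L1 : sum over the region `jb ≤ M`. -/
lemma region_sum {σ : ℝ} (hσ0 : 0 ≤ σ) (hσd : σ < d) :
    ∃ C : ℝ, 0 < C ∧ ∀ (a : Fin d → ℝ) (M : ℝ), 1 ≤ M →
      ∑' n, Set.indicator {n | jb a n ≤ M}
          (fun n => ENNReal.ofReal (jb a n ^ (-σ))) n
        ≤ ENNReal.ofReal (C * M ^ ((d:ℝ) - σ)) := by
  set r : ℝ := (2:ℝ) ^ ((d:ℝ) - σ) with hr
  have hdσ : (0:ℝ) < (d:ℝ) - σ := by linarith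
  have hr1 : 1 < r :=
    (Real.one_lt_rpow_iff_of_pos (by norm_num)).mpr (Or.inl ⟨one_lt_two, hdσ⟩)
  have hrpos : (0:ℝ) < r := lt_trans one_pos hr1
  refine ⟨(6:ℝ)^d * r * r / (r - 1),
    div_pos (mul_pos (mul_pos (by positivity) hrpos) hrpos) (by linarith), ?_⟩
  intro a M hM
  set f : (Fin d → ℤ) → ℝ≥0∞ := fun n => ENNReal.ofReal (jb a n ^ (-σ)) with hf
  set K := ⌈Real.logb 2 M⌉₊ with hK
  have hlogb : 0 ≤ Real.logb 2 M := Real.logb_nonneg (by norm_num) hM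
  have hMpos : (0:ℝ) < M := lt_of_lt_of_le one_pos hM
  have h2logb : (2:ℝ) ^ Real.logb 2 M = M := Real.rpow_logb (by norm_num) (by norm_num) hMpos
  have hK1 : M ≤ (2:ℝ) ^ K := by
    rw [← Real.rpow_natCast 2 K, ← h2logb]
    exact Real.rpow_le_rpow_of_exponent_le one_le_two (Nat.le_ceil _)
  have hK2 : (2:ℝ) ^ K ≤ 2 * M := by
    rw [← Real.rpow_natCast 2 K]
    calc (2:ℝ) ^ (K:ℝ) ≤ (2:ℝ) ^ (Real.logb 2 M + 1) :=
          Real.rpow_le_rpow_of_exponent_le one_le_two (Nat.ceil_lt_add_one hlogb).le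
      _ = 2 * M := by rw [Real.rpow_add (by norm_num), h2logb, Real.rpow_one]; ring
  -- pointwise covering
  have hcov : ∀ n, Set.indicator {n | jb a n ≤ M} f n
      ≤ ∑ k ∈ Finset.range (K+1),
          Set.indicator {n | (2:ℝ)^k ≤ jb a n ∧ jb a n ≤ (2:ℝ)^(k+1)} f n := by
    intro n
    by_cases hn : jb a n ≤ M
    · rw [Set.indicator_of_mem (show n ∈ {n | jb a n ≤ M} from hn) f]
      set P : ℕ → Prop := fun k => (2:ℝ)^k ≤ jb a n with hP
      have hP0 : P 0 := by simpa [hP] using one_le_jb a n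
      set k0 := Nat.findGreatest P K with hk0
      have hk0P : P k0 := Nat.findGreatest_spec (Nat.zero_le K) hP0
      have hk0K : k0 ≤ K := Nat.findGreatest_le K
      have hup : jb a n ≤ (2:ℝ)^(k0+1) := by
        by_contra hcon
        push_neg at hcon
        have hPk1 : P (k0+1) := le_of_lt hcon
        have hle : (2:ℝ)^(k0+1) ≤ (2:ℝ)^K := le_trans (le_of_lt hcon) (le_trans hn hK1)
        have : k0 + 1 ≤ K := (pow_le_pow_iff_right₀ (by norm_num : (1:ℝ) < 2)).mp hle
        exact Nat.findGreatest_is_greatest (Nat.lt_succ_self k0) this hPk1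
      calc f n = Set.indicator {n | (2:ℝ)^k0 ≤ jb a n ∧ jb a n ≤ (2:ℝ)^(k0+1)} f n :=
            (Set.indicator_of_mem (show n ∈ {n | (2:ℝ)^k0 ≤ jb a n ∧ jb a n ≤ (2:ℝ)^(k0+1)}
              from ⟨hk0P, hup⟩) f).symm
        _ ≤ _ := Finset.single_le_sum (f := fun k =>
              Set.indicator {n | (2:ℝ)^k ≤ jb a n ∧ jb a n ≤ (2:ℝ)^(k+1)} f n)
              (fun _ _ => zero_le) (Finset.mem_range.mpr (Nat.lt_succ_of_le hk0K))
    · rw [Set.indicator_of_notMem (show n ∉ {n | jb a n ≤ M} from hn) f]; exact zero_le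
  -- real-number geometric estimate
  have hterm : ∀ k : ℕ, (3 * (2:ℝ)^(k+1))^d * ((2:ℝ)^k) ^ (-σ) = 6^d * r^k := by
    intro k
    have e1 : (3 * (2:ℝ)^(k+1))^d = 6^d * ((2:ℝ)^((k:ℝ)*(d:ℝ))) := by
      have : (3:ℝ) * 2^(k+1) = 6 * 2^k := by ring
      rw [this, mul_pow, ← pow_mul, ← Real.rpow_natCast 2 (k*d)]
      push_cast; ring_nf
    have e2 : ((2:ℝ)^k) ^ (-σ) = (2:ℝ) ^ ((k:ℝ) * (-σ)) := by
      rw [← Real.rpow_natCast 2 k, ← Real.rpow_mul (by norm_num)]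
    have e3 : r ^ k = (2:ℝ) ^ ((k:ℝ)*(d:ℝ) + (k:ℝ)*(-σ)) := by
      rw [hr, ← Real.rpow_natCast _ k, ← Real.rpow_mul (by norm_num)]
      ring_nf
    rw [e1, e2, e3, mul_assoc, ← Real.rpow_add (by norm_num)]
  have hgeom : ∑ k ∈ Finset.range (K+1), (3 * (2:ℝ)^(k+1))^d * ((2:ℝ)^k) ^ (-σ)
      ≤ (6:ℝ)^d * r * r / (r - 1) * M ^ ((d:ℝ) - σ) := by
    have hsum : ∑ k ∈ Finset.range (K+1), (3 * (2:ℝ)^(k+1))^d * ((2:ℝ)^k) ^ (-σ)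
        = 6^d * ((r^(K+1) - 1)/(r - 1)) := by
      calc ∑ k ∈ Finset.range (K+1), (3 * (2:ℝ)^(k+1))^d * ((2:ℝ)^k) ^ (-σ)
          = ∑ k ∈ Finset.range (K+1), 6^d * r^k :=
            Finset.sum_congr rfl (fun k _ => hterm k)
        _ = 6^d * ∑ k ∈ Finset.range (K+1), r^k := by rw [← Finset.mul_sum]
        _ = 6^d * ((r^(K+1) - 1)/(r - 1)) := by rw [geom_sum_eq hr1.ne' (K+1)]
    have hrK : r ^ K ≤ r * M ^ ((d:ℝ) - σ) := by
      have e4 : r ^ K = ((2:ℝ)^K) ^ ((d:ℝ) - σ) := by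
        rw [hr, ← Real.rpow_natCast ((2:ℝ) ^ ((d:ℝ) - σ)) K, ← Real.rpow_natCast 2 K,
          ← Real.rpow_mul (by norm_num), ← Real.rpow_mul (by norm_num), mul_comm]
      rw [e4]
      calc ((2:ℝ)^K) ^ ((d:ℝ) - σ) ≤ (2*M) ^ ((d:ℝ) - σ) :=
            Real.rpow_le_rpow (by positivity) hK2 hdσ.le
        _ = r * M ^ ((d:ℝ) - σ) := by
            rw [Real.mul_rpow (by norm_num) (by positivity), hr]
    have hMe : (0:ℝ) < M ^ ((d:ℝ) - σ) := Real.rpow_pos_of_pos hMpos _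
    rw [hsum]
    have hnum : r^(K+1) - 1 ≤ r * r * M ^ ((d:ℝ) - σ) := by
      rw [pow_succ]
      nlinarith
    calc (6:ℝ)^d * ((r^(K+1) - 1)/(r - 1))
        ≤ 6^d * ((r * r * M ^ ((d:ℝ) - σ))/(r - 1)) := by
          have hden : (0:ℝ) < r - 1 := by linarith
          gcongr
      _ = (6:ℝ)^d * r * r / (r - 1) * M ^ ((d:ℝ) - σ) := by ring
  -- ENNReal chain
  calc ∑' n, Set.indicator {n | jb a n ≤ M} f n
      ≤ ∑' n, ∑ k ∈ Finset.range (K+1),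
          Set.indicator {n | (2:ℝ)^k ≤ jb a n ∧ jb a n ≤ (2:ℝ)^(k+1)} f n :=
        ENNReal.tsum_le_tsum hcov
    _ = ∑ k ∈ Finset.range (K+1), ∑' n,
          Set.indicator {n | (2:ℝ)^k ≤ jb a n ∧ jb a n ≤ (2:ℝ)^(k+1)} f n :=
        Summable.tsum_finsetSum (fun _ _ => ENNReal.summable)
    _ ≤ ∑ k ∈ Finset.range (K+1), ENNReal.ofReal ((3 * (2:ℝ)^(k+1))^d * ((2:ℝ)^k) ^ (-σ)) := by
        apply Finset.sum_le_sum
        intro k _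
        exact block_sum a hσ0 (by positivity) (one_le_two.trans (by
          calc (2:ℝ) = 2^1 := (pow_one 2).symm
            _ ≤ 2^(k+1) := pow_le_pow_right₀ one_le_two (Nat.le_add_left 1 k)))
    _ = ENNReal.ofReal (∑ k ∈ Finset.range (K+1), (3 * (2:ℝ)^(k+1))^d * ((2:ℝ)^k) ^ (-σ)) :=
        (ENNReal.ofReal_sum_of_nonneg (fun k _ => by positivity)).symm
    _ ≤ ENNReal.ofReal ((6:ℝ)^d * r * r / (r - 1) * M ^ ((d:ℝ) - σ)) :=
        ENNReal.ofReal_le_ofReal hgeom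

open Classical in
/-- L2 : tail sum over the region `R ≤ jb`. -/
lemma tail_sum {σ : ℝ} (hσd : (d:ℝ) < σ) :
    ∃ C : ℝ, 0 < C ∧ ∀ (a : Fin d → ℝ) (R : ℝ), 1 ≤ R →
      ∑' n, Set.indicator {n | R ≤ jb a n}
          (fun n => ENNReal.ofReal (jb a n ^ (-σ))) n
        ≤ ENNReal.ofReal (C * R ^ ((d:ℝ) - σ)) := by
  have hσ0 : 0 ≤ σ := le_trans (Nat.cast_nonneg d) hσd.le
  set ρ : ℝ := (2:ℝ) ^ ((d:ℝ) - σ) with hρ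
  have hρpos : 0 < ρ := Real.rpow_pos_of_pos (by norm_num) _
  have hρ1 : ρ < 1 := by
    rw [hρ, ← Real.rpow_zero 2]
    exact Real.rpow_lt_rpow_of_exponent_lt one_lt_two (by linarith)
  refine ⟨(6:ℝ)^d * (1 - ρ)⁻¹, mul_pos (by positivity) (inv_pos.mpr (by linarith)), ?_⟩
  intro a R hR
  have hRpos : (0:ℝ) < R := lt_of_lt_of_le one_pos hR
  set f : (Fin d → ℤ) → ℝ≥0∞ := fun n => ENNReal.ofReal (jb a n ^ (-σ)) with hf
  -- pointwise covering by countably many shells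
  have hcov : ∀ n, Set.indicator {n | R ≤ jb a n} f n
      ≤ ∑' k : ℕ, Set.indicator {n | R * 2^k ≤ jb a n ∧ jb a n ≤ R * 2^(k+1)} f n := by
    intro n
    by_cases hn : R ≤ jb a n
    · rw [Set.indicator_of_mem (show n ∈ {n | R ≤ jb a n} from hn) f]
      set P : ℕ → Prop := fun k => R * 2^k ≤ jb a n with hP
      have hP0 : P 0 := by simpa [hP] using hn
      set B := ⌊jb a n⌋₊ with hB
      have hall : ∀ m, P m → m ≤ B := by
        intro m hm
        apply Nat.le_floor
        have h2m : ((m:ℝ)) ≤ 2^m := by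
          calc ((m:ℝ)) ≤ ((2^m : ℕ) : ℝ) := by exact_mod_cast (Nat.lt_two_pow_self (n := m)).le
            _ = 2^m := by push_cast; ring
        calc ((m:ℝ)) ≤ 2^m := h2m
          _ ≤ R * 2^m := by nlinarith [pow_pos (show (0:ℝ) < 2 by norm_num) m]
          _ ≤ jb a n := hm
      set k0 := Nat.findGreatest P B with hk0
      have hk0P : P k0 := Nat.findGreatest_spec (Nat.zero_le B) hP0
      have hup : jb a n ≤ R * 2^(k0+1) := by
        by_contra hcon
        push_neg at hcon
        have hPk1 : P (k0+1) := le_of_lt hcon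
        exact Nat.findGreatest_is_greatest (Nat.lt_succ_self k0) (hall _ hPk1) hPk1
      calc f n = Set.indicator {n | R * 2^k0 ≤ jb a n ∧ jb a n ≤ R * 2^(k0+1)} f n :=
            (Set.indicator_of_mem (show n ∈ {n | R * 2^k0 ≤ jb a n ∧ jb a n ≤ R * 2^(k0+1)}
              from ⟨hk0P, hup⟩) f).symm
        _ ≤ _ := ENNReal.le_tsum k0
    · rw [Set.indicator_of_notMem (show n ∉ {n | R ≤ jb a n} from hn) f]; exact zero_le
  have hterm : ∀ k : ℕ, (3 * (R * (2:ℝ)^(k+1)))^d * ((R * (2:ℝ)^k)) ^ (-σ)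
      = (6^d * R ^ ((d:ℝ) - σ)) * ρ^k := by
    intro k
    have e0 : ((R * (2:ℝ)^k)) ^ (-σ) = R ^ (-σ) * ((2:ℝ)^k) ^ (-σ) :=
      Real.mul_rpow hRpos.le (by positivity)
    have e1 : (3 * (R * (2:ℝ)^(k+1)))^d = 6^d * R^d * ((2:ℝ)^((k:ℝ)*(d:ℝ))) := by
      have : (3:ℝ) * (R * 2^(k+1)) = (6 * R) * 2^k := by ring
      rw [this, mul_pow, mul_pow, ← pow_mul, ← Real.rpow_natCast 2 (k*d)]
      push_cast; ring_nf
    have e2 : ((2:ℝ)^k) ^ (-σ) = (2:ℝ) ^ ((k:ℝ) * (-σ)) := by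
      rw [← Real.rpow_natCast 2 k, ← Real.rpow_mul (by norm_num)]
    have e3 : ρ ^ k = (2:ℝ) ^ ((k:ℝ)*(d:ℝ) + (k:ℝ)*(-σ)) := by
      rw [hρ, ← Real.rpow_natCast _ k, ← Real.rpow_mul (by norm_num)]
      ring_nf
    have e4 : (R:ℝ)^d * R ^ (-σ) = R ^ ((d:ℝ) - σ) := by
      rw [← Real.rpow_natCast R d, ← Real.rpow_add hRpos]
      ring_nf
    rw [e0, e1, e2, e3, Real.rpow_add (by norm_num : (0:ℝ) < 2), ← e4]
    ring
  calc ∑' n, Set.indicator {n | R ≤ jb a n} f n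
      ≤ ∑' n, ∑' k : ℕ,
          Set.indicator {n | R * 2^k ≤ jb a n ∧ jb a n ≤ R * 2^(k+1)} f n :=
        ENNReal.tsum_le_tsum hcov
    _ = ∑' k : ℕ, ∑' n,
          Set.indicator {n | R * 2^k ≤ jb a n ∧ jb a n ≤ R * 2^(k+1)} f n :=
        ENNReal.tsum_comm
    _ ≤ ∑' k : ℕ, ENNReal.ofReal ((3 * (R * (2:ℝ)^(k+1)))^d * ((R * (2:ℝ)^k)) ^ (-σ)) := by
        apply ENNReal.tsum_le_tsum
        intro k
        apply block_sum a hσ0 (by positivity)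
        calc (1:ℝ) ≤ R := hR
          _ = R * 1 := (mul_one R).symm
          _ ≤ R * 2^(k+1) := by
              apply mul_le_mul_of_nonneg_left _ hRpos.le
              exact one_le_pow₀ one_le_two
    _ = ∑' k : ℕ, (ENNReal.ofReal (6^d * R ^ ((d:ℝ) - σ)) * ENNReal.ofReal ρ ^ k) := by
        apply tsum_congr
        intro k
        rw [hterm k, ENNReal.ofReal_mul (by positivity), ENNReal.ofReal_pow hρpos.le]
    _ = ENNReal.ofReal (6^d * R ^ ((d:ℝ) - σ)) * (1 - ENNReal.ofReal ρ)⁻¹ := by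
        rw [ENNReal.tsum_mul_left, ENNReal.tsum_geometric]
    _ = ENNReal.ofReal ((6:ℝ)^d * (1 - ρ)⁻¹ * R ^ ((d:ℝ) - σ)) := by
        rw [show (1:ℝ≥0∞) - ENNReal.ofReal ρ = ENNReal.ofReal (1 - ρ) by
              rw [ENNReal.ofReal_sub 1 hρpos.le, ENNReal.ofReal_one],
          ← ENNReal.ofReal_inv_of_pos (by linarith), ← ENNReal.ofReal_mul (by positivity)]
        congr 1
        ring


lemma jb_pos (a : Fin d → ℝ) (n : Fin d → ℤ) : 0 < jb a n :=
  lt_of_lt_of_le one_pos (one_le_jb a n)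

lemma jbR_max_lower (a : Fin d → ℝ) (n : Fin d → ℤ) :
    jbR a ≤ 2 * max (jb 0 n) (jb a n) := by
  have h := jbR_sub_le_two_mul_max (fun i => (n i : ℝ)) (fun i => (n i : ℝ) + a i)
  have h1 : jbR (fun i => ((n i : ℝ) + a i) - (n i : ℝ)) = jbR a := by
    congr 1; funext i; ring
  have h2 : jb (0 : Fin d → ℝ) n = jbR (fun i => (n i : ℝ)) := by
    simp [jb]
  rw [h1] at h
  rw [h2]
  exact h

/-- L3 : the two-factor Peetre-type estimate. -/
lemma two_factor {α β : ℝ} (hα0 : 0 < α) (hαd : α < d) (hβ0 : 0 < β) (hβd : β < d)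
    (hs : (d:ℝ) < α + β) :
    ∃ C : ℝ, 0 < C ∧ ∀ a : Fin d → ℝ,
      ∑' n : Fin d → ℤ, ENNReal.ofReal (jb 0 n ^ (-α) * jb a n ^ (-β))
        ≤ ENNReal.ofReal (C * jbR a ^ ((d:ℝ) - α - β)) := by
  obtain ⟨C1, hC1, hC1e⟩ := region_sum (d := d) hα0.le hαd
  obtain ⟨C2, hC2, hC2e⟩ := region_sum (d := d) hβ0.le hβd
  obtain ⟨C3, hC3, hC3e⟩ := tail_sum (d := d) hs
  refine ⟨2^β * C1 + 2^α * C2 + 2 * C3, by positivity, ?_⟩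
  intro a
  set A := jbR a with hA
  have hA1 : 1 ≤ A := one_le_jbR a
  have hApos : 0 < A := lt_of_lt_of_le one_pos hA1
  set f : (Fin d → ℤ) → ℝ≥0∞ := fun n => ENNReal.ofReal (jb 0 n ^ (-α) * jb a n ^ (-β))
    with hf
  set S1 : Set (Fin d → ℤ) := {n | jb 0 n ≤ A ∧ A ≤ 2 * jb a n} with hS1
  set S2 : Set (Fin d → ℤ) := {n | jb a n ≤ A ∧ A ≤ 2 * jb 0 n} with hS2
  set T0 : Set (Fin d → ℤ) := {n | A ≤ jb 0 n} with hT0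
  set Ta : Set (Fin d → ℤ) := {n | A ≤ jb a n} with hTa
  set g0 : (Fin d → ℤ) → ℝ≥0∞ := fun n => ENNReal.ofReal (jb 0 n ^ (-(α+β))) with hg0
  set ga : (Fin d → ℤ) → ℝ≥0∞ := fun n => ENNReal.ofReal (jb a n ^ (-(α+β))) with hga
  -- pointwise cover
  have hcov : ∀ n, f n ≤ S1.indicator f n +
      (S2.indicator f n + (T0.indicator g0 n + Ta.indicator ga n)) := by
    intro n
    have hj0 := jb_pos (0 : Fin d → ℝ) n
    have hja := jb_pos a n
    have hin1 : n ∈ S1 → f n ≤ S1.indicator f n +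
        (S2.indicator f n + (T0.indicator g0 n + Ta.indicator ga n)) := fun hn => by
      rw [Set.indicator_of_mem hn f]; exact le_self_add
    have hin2 : n ∈ S2 → f n ≤ S1.indicator f n +
        (S2.indicator f n + (T0.indicator g0 n + Ta.indicator ga n)) := fun hn => by
      rw [Set.indicator_of_mem hn f]
      exact le_add_left le_self_add
    rcases le_or_gt A (jb 0 n) with h0 | h0 <;> rcases le_or_gt A (jb a n) with ha | ha
    · -- both large : tail region
      rcases le_total (jb 0 n) (jb a n) with hcmp | hcmp
      · have hfn : f n ≤ T0.indicator g0 n := by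
          rw [Set.indicator_of_mem (show n ∈ T0 from h0) g0, hf, hg0]
          apply ENNReal.ofReal_le_ofReal
          calc jb 0 n ^ (-α) * jb a n ^ (-β)
              ≤ jb 0 n ^ (-α) * jb 0 n ^ (-β) := by
                apply mul_le_mul_of_nonneg_left _ (by positivity)
                exact Real.rpow_le_rpow_of_nonpos hj0 hcmp (by linarith)
            _ = jb 0 n ^ (-(α+β)) := by rw [← Real.rpow_add hj0]; ring_nf
        refine le_trans hfn ?_
        exact le_add_left (le_add_left le_self_add)
      · have hfn : f n ≤ Ta.indicator ga n := by
          rw [Set.indicator_of_mem (show n ∈ Ta from ha) ga, hf, hga]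
          apply ENNReal.ofReal_le_ofReal
          calc jb 0 n ^ (-α) * jb a n ^ (-β)
              ≤ jb a n ^ (-α) * jb a n ^ (-β) := by
                apply mul_le_mul_of_nonneg_right _ (by positivity)
                exact Real.rpow_le_rpow_of_nonpos hja hcmp (by linarith)
            _ = jb a n ^ (-(α+β)) := by rw [← Real.rpow_add hja]; ring_nf
        refine le_trans hfn ?_
        exact le_add_left (le_add_left (le_add_left le_rfl))
    · -- A ≤ jb0, jba < A : S2
      exact hin2 ⟨ha.le, by linarith⟩
    · -- jb0 < A, A ≤ jba : S1
      exact hin1 ⟨h0.le, by linarith⟩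
    · -- both small : use max lower bound
      have hmax := jbR_max_lower a n
      rcases le_total (jb 0 n) (jb a n) with hcmp | hcmp
      · rw [max_eq_right hcmp] at hmax
        exact hin1 ⟨h0.le, hmax⟩
      · rw [max_eq_left hcmp] at hmax
        exact hin2 ⟨ha.le, hmax⟩
  -- piece 1
  have hp1 : ∑' n, S1.indicator f n
      ≤ ENNReal.ofReal (2^β * C1 * A ^ ((d:ℝ) - α - β)) := by
    have hsub : ∀ n, S1.indicator f n ≤
        ENNReal.ofReal ((A/2) ^ (-β)) *
          Set.indicator {n | jb (0 : Fin d → ℝ) n ≤ A}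
            (fun n => ENNReal.ofReal (jb 0 n ^ (-α))) n := by
      intro n
      by_cases hn : n ∈ S1
      · rw [Set.indicator_of_mem hn f,
          Set.indicator_of_mem (show n ∈ {n | jb (0:Fin d → ℝ) n ≤ A} from hn.1)]
        rw [← ENNReal.ofReal_mul (by positivity), hf]
        apply ENNReal.ofReal_le_ofReal
        rw [mul_comm]
        apply mul_le_mul_of_nonneg_right _ (Real.rpow_nonneg (jb_pos _ n).le _)
        apply Real.rpow_le_rpow_of_nonpos (by linarith : (0:ℝ) < A/2) _ (by linarith)
        linarith [hn.2]
      · rw [Set.indicator_of_notMem hn f]; exact zero_le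
    calc ∑' n, S1.indicator f n
        ≤ ∑' n, ENNReal.ofReal ((A/2) ^ (-β)) *
            Set.indicator {n | jb (0 : Fin d → ℝ) n ≤ A}
              (fun n => ENNReal.ofReal (jb 0 n ^ (-α))) n := ENNReal.tsum_le_tsum hsub
      _ = ENNReal.ofReal ((A/2) ^ (-β)) * ∑' n,
            Set.indicator {n | jb (0 : Fin d → ℝ) n ≤ A}
              (fun n => ENNReal.ofReal (jb 0 n ^ (-α))) n := ENNReal.tsum_mul_left
      _ ≤ ENNReal.ofReal ((A/2) ^ (-β)) * ENNReal.ofReal (C1 * A ^ ((d:ℝ) - α)) := by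
          exact mul_le_mul_right (hC1e 0 A hA1) _
      _ = ENNReal.ofReal (2^β * C1 * A ^ ((d:ℝ) - α - β)) := by
          rw [← ENNReal.ofReal_mul (by positivity)]
          congr 1
          rw [Real.div_rpow hApos.le (by norm_num), Real.rpow_neg (by norm_num : (0:ℝ) ≤ 2),
            Real.rpow_neg hApos.le]
          rw [show (d:ℝ) - α - β = ((d:ℝ) - α) + (-β) by ring,
            Real.rpow_add hApos, Real.rpow_neg hApos.le]
          field_simp
  -- piece 2
  have hp2 : ∑' n, S2.indicator f n
      ≤ ENNReal.ofReal (2^α * C2 * A ^ ((d:ℝ) - α - β)) := by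
    have hsub : ∀ n, S2.indicator f n ≤
        ENNReal.ofReal ((A/2) ^ (-α)) *
          Set.indicator {n | jb a n ≤ A}
            (fun n => ENNReal.ofReal (jb a n ^ (-β))) n := by
      intro n
      by_cases hn : n ∈ S2
      · rw [Set.indicator_of_mem hn f,
          Set.indicator_of_mem (show n ∈ {n | jb a n ≤ A} from hn.1)]
        rw [← ENNReal.ofReal_mul (by positivity), hf]
        apply ENNReal.ofReal_le_ofReal
        apply mul_le_mul_of_nonneg_right _ (Real.rpow_nonneg (jb_pos _ n).le _)
        apply Real.rpow_le_rpow_of_nonpos (by linarith : (0:ℝ) < A/2) _ (by linarith)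
        linarith [hn.2]
      · rw [Set.indicator_of_notMem hn f]; exact zero_le
    calc ∑' n, S2.indicator f n
        ≤ ∑' n, ENNReal.ofReal ((A/2) ^ (-α)) *
            Set.indicator {n | jb a n ≤ A}
              (fun n => ENNReal.ofReal (jb a n ^ (-β))) n := ENNReal.tsum_le_tsum hsub
      _ = ENNReal.ofReal ((A/2) ^ (-α)) * ∑' n,
            Set.indicator {n | jb a n ≤ A}
              (fun n => ENNReal.ofReal (jb a n ^ (-β))) n := ENNReal.tsum_mul_left
      _ ≤ ENNReal.ofReal ((A/2) ^ (-α)) * ENNReal.ofReal (C2 * A ^ ((d:ℝ) - β)) := by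
          exact mul_le_mul_right (hC2e a A hA1) _
      _ = ENNReal.ofReal (2^α * C2 * A ^ ((d:ℝ) - α - β)) := by
          rw [← ENNReal.ofReal_mul (by positivity)]
          congr 1
          rw [Real.div_rpow hApos.le (by norm_num), Real.rpow_neg (by norm_num : (0:ℝ) ≤ 2),
            Real.rpow_neg hApos.le]
          rw [show (d:ℝ) - α - β = ((d:ℝ) - β) + (-α) by ring,
            Real.rpow_add hApos, Real.rpow_neg hApos.le]
          field_simp
  -- pieces 3 and 4 (tails)
  have hexp : (d:ℝ) - (α + β) = (d:ℝ) - α - β := by ring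
  have hp3 : ∑' n, T0.indicator g0 n ≤ ENNReal.ofReal (C3 * A ^ ((d:ℝ) - α - β)) := by
    have := hC3e 0 A hA1
    rw [hexp] at this
    exact this
  have hp4 : ∑' n, Ta.indicator ga n ≤ ENNReal.ofReal (C3 * A ^ ((d:ℝ) - α - β)) := by
    have := hC3e a A hA1
    rw [hexp] at this
    exact this
  -- combine
  have he : 0 ≤ A ^ ((d:ℝ) - α - β) := Real.rpow_nonneg hApos.le _
  calc ∑' n, f n
      ≤ ∑' n, (S1.indicator f n +
          (S2.indicator f n + (T0.indicator g0 n + Ta.indicator ga n))) :=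
        ENNReal.tsum_le_tsum hcov
    _ = ∑' n, S1.indicator f n + (∑' n, S2.indicator f n +
          (∑' n, T0.indicator g0 n + ∑' n, Ta.indicator ga n)) := by
        rw [ENNReal.tsum_add, ENNReal.tsum_add, ENNReal.tsum_add]
    _ ≤ ENNReal.ofReal (2^β * C1 * A ^ ((d:ℝ) - α - β)) +
          (ENNReal.ofReal (2^α * C2 * A ^ ((d:ℝ) - α - β)) +
            (ENNReal.ofReal (C3 * A ^ ((d:ℝ) - α - β)) +
              ENNReal.ofReal (C3 * A ^ ((d:ℝ) - α - β)))) :=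
        add_le_add hp1 (add_le_add hp2 (add_le_add hp3 hp4))
    _ = ENNReal.ofReal ((2^β * C1 + 2^α * C2 + 2 * C3) * A ^ ((d:ℝ) - α - β)) := by
        rw [← ENNReal.ofReal_add (mul_nonneg (by positivity) he) (mul_nonneg (by positivity) he),
          ← ENNReal.ofReal_add (mul_nonneg (by positivity) he)
            (add_nonneg (mul_nonneg (by positivity) he) (mul_nonneg (by positivity) he)),
          ← ENNReal.ofReal_add (mul_nonneg (by positivity) he)
            (add_nonneg (mul_nonneg (by positivity) he)
              (add_nonneg (mul_nonneg (by positivity) he) (mul_nonneg (by positivity) he)))]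
        congr 1
        ring

lemma jbZ_eq_jb_zero (n : Fin d → ℤ) : jbZ n = jb 0 n := by
  simp [jbZ, jb, jbR]


end TwoShift

open TwoShift in
theorem sum_two_shift_bracket (d : ℕ) (hd : 1 ≤ d) (α β γ : ℝ)
    (h1 : α + 2 * β > d) (h2 : α + 2 * γ > d)
    (h3 : α < d) (h4 : 2 * β < d) (h5 : 2 * γ < d) :
    ∃ C > 0, ∀ a b : Fin d → ℝ,
      (∑' n : Fin d → ℤ,
          jbZ n ^ (-α) * jbR (fun i => (n i : ℝ) + a i) ^ (-β)
            * jbR (fun i => (n i : ℝ) + b i) ^ (-γ))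
        ≤ C * jbR a ^ ((d : ℝ) / 2 - α / 2 - β) * jbR b ^ ((d : ℝ) / 2 - α / 2 - γ) := by
  have hα0 : 0 < α := by linarith
  have hβ0 : 0 < 2 * β := by linarith
  have hγ0 : 0 < 2 * γ := by linarith
  obtain ⟨Ca, hCa, hCae⟩ := two_factor (d := d) hα0 h3 hβ0 h4 (by linarith)
  obtain ⟨Cb, hCb, hCbe⟩ := two_factor (d := d) hα0 h3 hγ0 h5 (by linarith)
  refine ⟨Ca ^ ((1:ℝ)/2) * Cb ^ ((1:ℝ)/2), by positivity, ?_⟩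
  intro a b
  set ea : ℝ := (d : ℝ) / 2 - α / 2 - β with hea
  set eb : ℝ := (d : ℝ) / 2 - α / 2 - γ with heb
  have hRHS0 : 0 ≤ Ca ^ ((1:ℝ)/2) * Cb ^ ((1:ℝ)/2) * jbR a ^ ea * jbR b ^ eb := by
    have := jbR_pos a; have := jbR_pos b
    apply mul_nonneg (mul_nonneg (by positivity) (Real.rpow_nonneg (jbR_pos a).le _))
      (Real.rpow_nonneg (jbR_pos b).le _)
  -- the ENNReal master inequality
  have key : ∑' n : Fin d → ℤ, ENNReal.ofReal
        (jbZ n ^ (-α) * jbR (fun i => (n i : ℝ) + a i) ^ (-β)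
          * jbR (fun i => (n i : ℝ) + b i) ^ (-γ))
      ≤ ENNReal.ofReal (Ca ^ ((1:ℝ)/2) * Cb ^ ((1:ℝ)/2) * jbR a ^ ea * jbR b ^ eb) := by
    set F : (Fin d → ℤ) → ℝ≥0∞ := fun n => ENNReal.ofReal (jb 0 n ^ (-(α/2)) * jb a n ^ (-β))
      with hF
    set G : (Fin d → ℤ) → ℝ≥0∞ := fun n => ENNReal.ofReal (jb 0 n ^ (-(α/2)) * jb b n ^ (-γ))
      with hG
    have hsplit : ∀ n : Fin d → ℤ, ENNReal.ofReal
          (jbZ n ^ (-α) * jbR (fun i => (n i : ℝ) + a i) ^ (-β)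
            * jbR (fun i => (n i : ℝ) + b i) ^ (-γ)) = F n * G n := by
      intro n
      have hj0 := jb_pos (0 : Fin d → ℝ) n
      have hja := jb_pos a n
      have hjb := jb_pos b n
      rw [hF, hG, ← ENNReal.ofReal_mul (by positivity)]
      congr 1
      rw [jbZ_eq_jb_zero, show -α = (-(α/2)) + (-(α/2)) by ring, Real.rpow_add hj0]
      show jb 0 n ^ (-(α/2)) * jb 0 n ^ (-(α/2)) * jb a n ^ (-β) * jb b n ^ (-γ) = _
      ring
    have hCS : ∑' n, F n * G n
        ≤ (∑' n, F n ^ (2:ℝ)) ^ ((1:ℝ)/2) * (∑' n, G n ^ (2:ℝ)) ^ ((1:ℝ)/2) := by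
      have hconj : Real.HolderConjugate 2 2 := Real.HolderConjugate.two_two
      have h := ENNReal.lintegral_mul_le_Lp_mul_Lq (Measure.count : Measure (Fin d → ℤ)) hconj
        (measurable_of_countable F).aemeasurable (measurable_of_countable G).aemeasurable
      simpa [lintegral_count] using h
    have hFsq : ∀ n, F n ^ (2:ℝ) = ENNReal.ofReal (jb 0 n ^ (-α) * jb a n ^ (-(2*β))) := by
      intro n
      have hj0 := jb_pos (0 : Fin d → ℝ) n
      have hja := jb_pos a n
      rw [hF, ENNReal.ofReal_rpow_of_pos (by positivity)]
      congr 1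
      rw [Real.mul_rpow (by positivity) (by positivity),
        ← Real.rpow_mul hj0.le, ← Real.rpow_mul hja.le,
        show -(α/2) * (2:ℝ) = -α by ring, show -β * (2:ℝ) = -(2*β) by ring]
    have hGsq : ∀ n, G n ^ (2:ℝ) = ENNReal.ofReal (jb 0 n ^ (-α) * jb b n ^ (-(2*γ))) := by
      intro n
      have hj0 := jb_pos (0 : Fin d → ℝ) n
      have hjb := jb_pos b n
      rw [hG, ENNReal.ofReal_rpow_of_pos (by positivity)]
      congr 1
      rw [Real.mul_rpow (by positivity) (by positivity),
        ← Real.rpow_mul hj0.le, ← Real.rpow_mul hjb.le,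
        show -(α/2) * (2:ℝ) = -α by ring, show -γ * (2:ℝ) = -(2*γ) by ring]
    have hFa : (∑' n, F n ^ (2:ℝ)) ^ ((1:ℝ)/2)
        ≤ ENNReal.ofReal (Ca ^ ((1:ℝ)/2) * jbR a ^ ea) := by
      have h1' : ∑' n, F n ^ (2:ℝ) ≤ ENNReal.ofReal (Ca * jbR a ^ ((d:ℝ) - α - 2*β)) := by
        rw [tsum_congr hFsq]
        exact hCae a
      calc (∑' n, F n ^ (2:ℝ)) ^ ((1:ℝ)/2)
          ≤ (ENNReal.ofReal (Ca * jbR a ^ ((d:ℝ) - α - 2*β))) ^ ((1:ℝ)/2) :=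
            ENNReal.rpow_le_rpow h1' (by norm_num)
        _ = ENNReal.ofReal ((Ca * jbR a ^ ((d:ℝ) - α - 2*β)) ^ ((1:ℝ)/2)) := by
            rw [ENNReal.ofReal_rpow_of_pos
              (mul_pos hCa (Real.rpow_pos_of_pos (jbR_pos a) _))]
        _ = ENNReal.ofReal (Ca ^ ((1:ℝ)/2) * jbR a ^ ea) := by
            congr 1
            rw [Real.mul_rpow hCa.le (Real.rpow_pos_of_pos (jbR_pos a) _).le,
              ← Real.rpow_mul (jbR_pos a).le]
            congr 1
            rw [hea]; ring
    have hGb : (∑' n, G n ^ (2:ℝ)) ^ ((1:ℝ)/2)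
        ≤ ENNReal.ofReal (Cb ^ ((1:ℝ)/2) * jbR b ^ eb) := by
      have h1' : ∑' n, G n ^ (2:ℝ) ≤ ENNReal.ofReal (Cb * jbR b ^ ((d:ℝ) - α - 2*γ)) := by
        rw [tsum_congr hGsq]
        exact hCbe b
      calc (∑' n, G n ^ (2:ℝ)) ^ ((1:ℝ)/2)
          ≤ (ENNReal.ofReal (Cb * jbR b ^ ((d:ℝ) - α - 2*γ))) ^ ((1:ℝ)/2) :=
            ENNReal.rpow_le_rpow h1' (by norm_num)
        _ = ENNReal.ofReal ((Cb * jbR b ^ ((d:ℝ) - α - 2*γ)) ^ ((1:ℝ)/2)) := by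
            rw [ENNReal.ofReal_rpow_of_pos
              (mul_pos hCb (Real.rpow_pos_of_pos (jbR_pos b) _))]
        _ = ENNReal.ofReal (Cb ^ ((1:ℝ)/2) * jbR b ^ eb) := by
            congr 1
            rw [Real.mul_rpow hCb.le (Real.rpow_pos_of_pos (jbR_pos b) _).le,
              ← Real.rpow_mul (jbR_pos b).le]
            congr 1
            rw [heb]; ring
    calc ∑' n : Fin d → ℤ, ENNReal.ofReal
          (jbZ n ^ (-α) * jbR (fun i => (n i : ℝ) + a i) ^ (-β)
            * jbR (fun i => (n i : ℝ) + b i) ^ (-γ))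
        = ∑' n, F n * G n := tsum_congr hsplit
      _ ≤ (∑' n, F n ^ (2:ℝ)) ^ ((1:ℝ)/2) * (∑' n, G n ^ (2:ℝ)) ^ ((1:ℝ)/2) := hCS
      _ ≤ ENNReal.ofReal (Ca ^ ((1:ℝ)/2) * jbR a ^ ea) *
            ENNReal.ofReal (Cb ^ ((1:ℝ)/2) * jbR b ^ eb) := mul_le_mul' hFa hGb
      _ = ENNReal.ofReal (Ca ^ ((1:ℝ)/2) * Cb ^ ((1:ℝ)/2) * jbR a ^ ea * jbR b ^ eb) := by
          rw [← ENNReal.ofReal_mul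
            (mul_nonneg (by positivity) (Real.rpow_nonneg (jbR_pos a).le _))]
          congr 1
          ring
  -- back to the reals
  by_cases hsum : Summable (fun n : Fin d → ℤ =>
      jbZ n ^ (-α) * jbR (fun i => (n i : ℝ) + a i) ^ (-β)
        * jbR (fun i => (n i : ℝ) + b i) ^ (-γ))
  · have h0 : ∀ n : Fin d → ℤ, 0 ≤ jbZ n ^ (-α) * jbR (fun i => (n i : ℝ) + a i) ^ (-β)
        * jbR (fun i => (n i : ℝ) + b i) ^ (-γ) := by
      intro n
      have h1' := jb_pos (0 : Fin d → ℝ) n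
      rw [jbZ_eq_jb_zero]
      have h2' := jb_pos a n
      have h3' := jb_pos b n
      have : jb a n = jbR (fun i => (n i : ℝ) + a i) := rfl
      rw [← this]
      have : jb b n = jbR (fun i => (n i : ℝ) + b i) := rfl
      rw [← this]
      positivity
    apply (ENNReal.ofReal_le_ofReal_iff hRHS0).mp
    rw [ENNReal.ofReal_tsum_of_nonneg h0 hsum]
    exact key
  · rw [tsum_eq_zero_of_not_summable hsum]
    exact hRHS0
end
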